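/- Let n ≥ 1 and let u : ℝⁿ × (0,∞) → ℝ be such that y ↦ u(y,t) is differentiable for every t > 0. Define Nu(x) = sup{ |u(y,t)| : y ∈ ℝⁿ, t > 0, |x−y| < t }, u⁺(x) = sup_{t>0} |u(x,t)|, and Gu(x) = sup{ t ‖∇_y u(y,t)‖ : y ∈ ℝⁿ, t > 0, |x−y| < 2t }, where ∇_y denotes the gradient in the first variable. Assume Nu, u⁺, and Gu are Lebesgue measurable. Then there exists a constant A = A(n) > 0, depending only on n, such that for every r with 0 < r ≤ 1, ‖Nu‖_{L¹(ℝⁿ)} ≤ 2 A r^{-n} ‖u⁺‖_{L¹(ℝⁿ)} + r ‖Gu‖_{L¹(ℝⁿ)}. -/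

import Mathlib

open MeasureTheory Set
open scoped ENNReal

/-- The nontangential maximal function `Nu(x) = sup_{|x−y|<t} |u(y,t)|`. -/
noncomputable def ntMax {n : ℕ} (u : EuclideanSpace ℝ (Fin n) → ℝ → ℝ)
    (x : EuclideanSpace ℝ (Fin n)) : ℝ≥0∞ :=
  ⨆ (y : EuclideanSpace ℝ (Fin n)) (t : ℝ) (_ : 0 < t) (_ : dist x y < t),
    ENNReal.ofReal |u y t|

/-- The radial maximal function `u⁺(x) = sup_{t>0} |u(x,t)|`. -/
noncomputable def radMax {n : ℕ} (u : EuclideanSpace ℝ (Fin n) → ℝ → ℝ)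
    (x : EuclideanSpace ℝ (Fin n)) : ℝ≥0∞ :=
  ⨆ (t : ℝ) (_ : 0 < t), ENNReal.ofReal |u x t|

/-- The nontangential gradient maximal function
`Gu(x) = sup_{|x−y|<2t} t ‖∇_y u(y,t)‖`. -/
noncomputable def gradMax {n : ℕ} (u : EuclideanSpace ℝ (Fin n) → ℝ → ℝ)
    (x : EuclideanSpace ℝ (Fin n)) : ℝ≥0∞ :=
  ⨆ (y : EuclideanSpace ℝ (Fin n)) (t : ℝ) (_ : 0 < t) (_ : dist x y < 2 * t),
    ENNReal.ofReal (t * ‖gradient (fun z => u z t) y‖)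

section Aux
open Metric

private lemma layercake_ennreal {α : Type*} [MeasurableSpace α] (μ : Measure α) [SigmaFinite μ]
    {g : α → ℝ≥0∞} (hg : Measurable g) :
    ∫⁻ x, g x ∂μ = ∫⁻ s in Set.Ioi (0:ℝ), μ {x | ENNReal.ofReal s < g x} := by
  have hT : MeasurableSet {p : α × ℝ | ENNReal.ofReal p.2 < g p.1} :=
    measurableSet_lt (ENNReal.measurable_ofReal.comp measurable_snd) (hg.comp measurable_fst)
  have key1 : ∀ x : α, ∫⁻ s in Set.Ioi (0:ℝ),
      ({p : α × ℝ | ENNReal.ofReal p.2 < g p.1}.indicator (1 : α × ℝ → ℝ≥0∞) (x, s)) = g x := by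
    intro x
    have h1 : (fun s : ℝ => ({p : α × ℝ | ENNReal.ofReal p.2 < g p.1}.indicator
        (1 : α × ℝ → ℝ≥0∞) (x, s)))
        = {s : ℝ | ENNReal.ofReal s < g x}.indicator (1 : ℝ → ℝ≥0∞) := by
      funext s
      by_cases h : ENNReal.ofReal s < g x <;> simp [Set.indicator_apply, Set.mem_setOf_eq, h]
    have hS : MeasurableSet {s : ℝ | ENNReal.ofReal s < g x} :=
      measurableSet_lt ENNReal.measurable_ofReal measurable_const
    rw [h1, lintegral_indicator_one hS, Measure.restrict_apply hS]
    rcases eq_or_ne (g x) ⊤ with hgx | hgx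
    · have h2 : {s : ℝ | ENNReal.ofReal s < g x} ∩ Set.Ioi 0 = Set.Ioi 0 := by
        rw [hgx]; ext s; simp
      rw [h2, Real.volume_Ioi, hgx]
    · have h2 : {s : ℝ | ENNReal.ofReal s < g x} ∩ Set.Ioi 0 = Set.Ioo 0 (g x).toReal := by
        ext s
        simp only [Set.mem_inter_iff, Set.mem_setOf_eq, Set.mem_Ioi, Set.mem_Ioo]
        constructor
        · rintro ⟨h1', h2'⟩
          exact ⟨h2', (ENNReal.ofReal_lt_iff_lt_toReal h2'.le hgx).1 h1'⟩
        · rintro ⟨h1', h2'⟩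
          exact ⟨(ENNReal.ofReal_lt_iff_lt_toReal h1'.le hgx).2 h2', h1'⟩
      rw [h2, Real.volume_Ioo, sub_zero, ENNReal.ofReal_toReal hgx]
  calc ∫⁻ x, g x ∂μ
      = ∫⁻ x, (∫⁻ s in Set.Ioi (0:ℝ),
          ({p : α × ℝ | ENNReal.ofReal p.2 < g p.1}.indicator (1 : α × ℝ → ℝ≥0∞) (x, s))) ∂μ :=
        (lintegral_congr key1).symm
    _ = ∫⁻ s in Set.Ioi (0:ℝ), (∫⁻ x,
          ({p : α × ℝ | ENNReal.ofReal p.2 < g p.1}.indicator (1 : α × ℝ → ℝ≥0∞) (x, s)) ∂μ) := by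
        apply lintegral_lintegral_swap
        exact (measurable_const.indicator hT).aemeasurable
    _ = ∫⁻ s in Set.Ioi (0:ℝ), μ {x | ENNReal.ofReal s < g x} := by
        refine lintegral_congr fun s => ?_
        have h1 : (fun x : α => ({p : α × ℝ | ENNReal.ofReal p.2 < g p.1}.indicator
            (1 : α × ℝ → ℝ≥0∞) (x, s)))
            = {x : α | ENNReal.ofReal s < g x}.indicator (1 : α → ℝ≥0∞) := by
          funext x
          by_cases h : ENNReal.ofReal s < g x <;> simp [Set.indicator_apply, Set.mem_setOf_eq, h]
        rw [h1, lintegral_indicator_one (measurableSet_lt measurable_const hg)]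


private lemma cover_bound {n : ℕ} (hn : 1 ≤ n) {r : ℝ} (hr0 : 0 < r) (hr1 : r ≤ 1)
    (S T : Set (EuclideanSpace ℝ (Fin n))) (hT : MeasurableSet T) (hTfin : volume T ≠ ⊤)
    (hcov : ∀ x ∈ S, ∃ y t, 0 < t ∧ dist x y < t ∧ Metric.ball y (r * t / 2) ⊆ T) :
    volume S ≤ ENNReal.ofReal ((8 / r) ^ n) * volume T := by
  set μ : Measure (EuclideanSpace ℝ (Fin n)) := volume with hμ
  have hd := finrank_euclideanSpace_fin (𝕜 := ℝ) (n := n)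
  set B₁ : ℝ≥0∞ := μ (ball (0 : EuclideanSpace ℝ (Fin n)) 1) with hB₁
  have hB₁pos : B₁ ≠ 0 := (measure_ball_pos μ 0 one_pos).ne'
  have hB₁top : B₁ ≠ ⊤ := measure_ball_lt_top.ne
  -- choose the balls
  have hcov' : ∀ a : S, ∃ y t, 0 < t ∧ dist (a : EuclideanSpace ℝ (Fin n)) y < t ∧
      Metric.ball y (r * t / 2) ⊆ T := fun a => hcov a a.2
  choose y t ht hdist hsub using hcov'
  -- the measure of each small ball
  have hsmall : ∀ a : S, μ (ball (y a) (r * t a / 2)) = ENNReal.ofReal ((r * t a / 2) ^ n) * B₁ := by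
    intro a
    have h := Measure.addHaar_ball_of_pos μ (y a) (show 0 < r * t a / 2 by have := ht a; nlinarith)
    rw [hd] at h
    exact h
  have hsmallle : ∀ a : S, ENNReal.ofReal ((r * t a / 2) ^ n) * B₁ ≤ μ T := by
    intro a
    rw [← hsmall a]; exact measure_mono (hsub a)
  -- bound on radii
  set K : ℝ := (μ T / B₁).toReal with hK
  have hK0 : 0 ≤ K := ENNReal.toReal_nonneg
  have hμT : μ T = ENNReal.ofReal K * B₁ := by
    rw [hK, ENNReal.ofReal_toReal (by
      simp only [Ne, ENNReal.div_eq_top]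
      push_neg
      exact ⟨fun _ => hB₁pos, fun h => absurd h hTfin⟩),
      ENNReal.div_mul_cancel hB₁pos hB₁top]
  have hRbound : ∀ a : S, t a ≤ (2 / r) * (K + 1) := by
    intro a
    by_contra hcon
    push_neg at hcon
    have h1 : K + 1 ≤ r * t a / 2 := by
      rw [div_mul_eq_mul_div, div_lt_iff₀ hr0] at hcon
      nlinarith
    have h2 : (r * t a / 2) ^ n ≤ K := by
      have := hsmallle a
      rw [hμT] at this
      have h3 := (ENNReal.mul_le_mul_iff_left hB₁pos hB₁top).1 this
      exact (ENNReal.ofReal_le_ofReal_iff hK0).1 h3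
    have h4 : K + 1 ≤ (r * t a / 2) ^ n := by
      calc K + 1 ≤ (K + 1) ^ n := le_self_pow₀ (by linarith) (by omega)
        _ ≤ (r * t a / 2) ^ n := pow_le_pow_left₀ (by linarith) h1 n
    linarith
  -- Vitali covering
  obtain ⟨v, -, hvdisj, hvcov⟩ :=
    Vitali.exists_disjoint_subfamily_covering_enlargement_closedBall (univ : Set S) y t
      ((2 / r) * (K + 1)) (fun a _ => hRbound a) 4 (by norm_num)
  have hvcount : v.Countable := by
    apply hvdisj.countable_of_nonempty_interior
    intro a _
    exact ⟨y a, ball_subset_interior_closedBall (mem_ball_self (ht a))⟩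
  have hsdisj : v.PairwiseDisjoint fun a => ball (y a) (r * t a / 2) := by
    apply hvdisj.mono
    intro a
    refine (ball_subset_closedBall).trans (closedBall_subset_closedBall ?_)
    nlinarith [ht a]
  have hScov : S ⊆ ⋃ b ∈ v, closedBall (y b) (4 * t b) := by
    intro x hx
    obtain ⟨b, hb, hsubb⟩ := hvcov ⟨x, hx⟩ (mem_univ _)
    refine mem_biUnion hb (hsubb ?_)
    exact ball_subset_closedBall (mem_ball.2 (hdist ⟨x, hx⟩))
  have hbig : ∀ b : S, μ (closedBall (y b) (4 * t b))
      = ENNReal.ofReal ((8 / r) ^ n) * μ (ball (y b) (r * t b / 2)) := by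
    intro b
    have h := Measure.addHaar_closedBall μ (y b) (show (0:ℝ) ≤ 4 * t b by nlinarith [ht b])
    rw [hd] at h
    have hpow : (4 * t b) ^ n = (8 / r) ^ n * (r * t b / 2) ^ n := by
      rw [← mul_pow]
      congr 1
      field_simp
      ring
    rw [hsmall b, h, hpow, ENNReal.ofReal_mul (pow_nonneg (div_nonneg (by norm_num) hr0.le) n), mul_assoc]
  calc μ S ≤ μ (⋃ b ∈ v, closedBall (y b) (4 * t b)) := measure_mono hScov
    _ ≤ ∑' b : v, μ (closedBall (y b) (4 * t b)) := measure_biUnion_le μ hvcount _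
    _ = ∑' b : v, ENNReal.ofReal ((8 / r) ^ n) * μ (ball (y b) (r * t b / 2)) := by
        exact tsum_congr fun b => hbig b
    _ = ENNReal.ofReal ((8 / r) ^ n) * ∑' b : v, μ (ball (y b) (r * t b / 2)) :=
        ENNReal.tsum_mul_left
    _ = ENNReal.ofReal ((8 / r) ^ n) * μ (⋃ b ∈ v, ball (y b) (r * t b / 2)) := by
        rw [measure_biUnion hvcount hsdisj fun b _ => measurableSet_ball]
    _ ≤ ENNReal.ofReal ((8 / r) ^ n) * μ T := by
        gcongr
        exact iUnion₂_subset fun b _ => hsub b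

private lemma goodlambda {n : ℕ} (u : EuclideanSpace ℝ (Fin n) → ℝ → ℝ)
    (hdiff : ∀ t : ℝ, 0 < t → Differentiable ℝ (fun y => u y t))
    {r s : ℝ} (hr0 : 0 < r) (hr1 : r ≤ 1) (hs : 0 < s)
    {x : EuclideanSpace ℝ (Fin n)}
    (hN : ENNReal.ofReal s < ntMax u x) (hG : gradMax u x ≤ ENNReal.ofReal (s / r)) :
    ∃ y t, 0 < t ∧ dist x y < t ∧
      Metric.ball y (r * t / 2) ⊆ {z | ENNReal.ofReal (s / 2) < radMax u z} := by
  rw [ntMax] at hN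
  simp only [lt_iSup_iff] at hN
  obtain ⟨y, t, ht, hxy, hlt⟩ := hN
  have hus : s < |u y t| := (ENNReal.ofReal_lt_ofReal_iff_of_nonneg hs.le).1 hlt
  refine ⟨y, t, ht, hxy, ?_⟩
  have hgrad : ∀ w ∈ Metric.ball y (r * t / 2), ‖fderiv ℝ (fun z => u z t) w‖ ≤ s / (r * t) := by
    intro w hw
    have hdw : dist x w < 2 * t := by
      have h1 : dist x w ≤ dist x y + dist y w := dist_triangle x y w
      have h2 : dist y w < r * t / 2 := by rwa [dist_comm, ← Metric.mem_ball]
      nlinarith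
    have h3 : ENNReal.ofReal (t * ‖gradient (fun z => u z t) w‖) ≤ gradMax u x := by
      rw [gradMax]
      exact le_iSup_of_le w (le_iSup_of_le t (le_iSup_of_le ht (le_iSup_of_le hdw le_rfl)))
    have h4 : t * ‖gradient (fun z => u z t) w‖ ≤ s / r :=
      (ENNReal.ofReal_le_ofReal_iff (by positivity)).1 (h3.trans hG)
    have h5 : ‖gradient (fun z => u z t) w‖ = ‖fderiv ℝ (fun z => u z t) w‖ := by
      rw [gradient]
      exact LinearIsometryEquiv.norm_map _ _
    rw [h5] at h4
    rw [show s / (r * t) = (s / r) / t by rw [div_div]]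
    rw [le_div_iff₀ ht]
    linarith [h4]
  intro z hz
  have hz' : dist z y < r * t / 2 := by rwa [Metric.mem_ball] at hz
  have hrt2 : 0 < r * t / 2 := by nlinarith
  have hyball : y ∈ Metric.ball y (r * t / 2) := Metric.mem_ball_self hrt2
  have hmvt := (convex_ball y (r * t / 2)).norm_image_sub_le_of_norm_fderiv_le
      (fun w _ => (hdiff t ht) w) hgrad hyball hz
  have hnz : ‖z - y‖ < r * t / 2 := by rwa [← dist_eq_norm]
  have hC : 0 ≤ s / (r * t) := by positivity
  have h6 : |u z t - u y t| ≤ s / 2 := by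
    rw [Real.norm_eq_abs] at hmvt
    calc |u z t - u y t| ≤ s / (r * t) * ‖z - y‖ := hmvt
      _ ≤ s / (r * t) * (r * t / 2) := by nlinarith [norm_nonneg (z - y)]
      _ = s / 2 := by field_simp
  have h7 : s / 2 < |u z t| := by
    have habs : |u y t| - |u z t| ≤ |u y t - u z t| := abs_sub_abs_le_abs_sub _ _
    rw [abs_sub_comm] at habs
    linarith
  have h8 : ENNReal.ofReal |u z t| ≤ radMax u z := by
    rw [radMax]
    exact le_iSup_of_le t (le_iSup_of_le ht le_rfl)
  exact lt_of_lt_of_le ((ENNReal.ofReal_lt_ofReal_iff_of_nonneg (by positivity)).2 h7) h8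


end Aux

open Metric in
/-- Inequality (5.4) of the paper:
`‖Nu‖_{L¹} ≤ 2 A r^{-n} ‖u⁺‖_{L¹} + r ‖Gu‖_{L¹}` with `A = A(n)`. -/
theorem stmt_15 (n : ℕ) (hn : 1 ≤ n) :
    ∃ A > (0:ℝ), ∀ (u : EuclideanSpace ℝ (Fin n) → ℝ → ℝ),
      (∀ t : ℝ, 0 < t → Differentiable ℝ (fun y => u y t)) →
      Measurable (ntMax u) → Measurable (radMax u) → Measurable (gradMax u) →
      ∀ r : ℝ, 0 < r → r ≤ 1 →
      (∫⁻ x, ntMax u x)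
        ≤ ENNReal.ofReal (2 * A / r ^ n) * (∫⁻ x, radMax u x) +
            ENNReal.ofReal r * ∫⁻ x, gradMax u x := by
  refine ⟨8 ^ n, by positivity, ?_⟩
  intro u hdiff hNm hRm hGm r hr0 hr1
  have hcoefpos : (0:ℝ) < 2 * 8 ^ n / r ^ n :=
    div_pos (by positivity) (pow_pos hr0 n)
  by_cases hRfin : (∫⁻ x, radMax u x) = ⊤
  · rw [hRfin, ENNReal.mul_top (ENNReal.ofReal_pos.2 hcoefpos).ne', top_add]
    exact le_top
  by_cases hGfin : (∫⁻ x, gradMax u x) = ⊤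
  · rw [hGfin, ENNReal.mul_top (ENNReal.ofReal_pos.2 hr0).ne', add_top]
    exact le_top
  set μ : Measure (EuclideanSpace ℝ (Fin n)) := volume with hμdef
  set c : ℝ≥0∞ := ENNReal.ofReal ((8 / r) ^ n) with hc
  -- the good-lambda measure inequality at each level s
  have key : ∀ s : ℝ, 0 < s →
      μ {x | ENNReal.ofReal s < ntMax u x}
        ≤ c * μ {x | ENNReal.ofReal s < 2 * radMax u x}
          + μ {x | ENNReal.ofReal s < ENNReal.ofReal r * gradMax u x} := by
    intro s hs
    set T : Set (EuclideanSpace ℝ (Fin n)) := {z | ENNReal.ofReal (s / 2) < radMax u z}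
      with hTdef
    have hTmeas : MeasurableSet T := measurableSet_lt measurable_const hRm
    have hTfin : μ T ≠ ⊤ := by
      intro htop
      have hsub : T ⊆ {x | ENNReal.ofReal (s / 2) ≤ radMax u x} :=
        fun x hx => le_of_lt (show ENNReal.ofReal (s / 2) < radMax u x from hx)
      have h1 : μ {x | ENNReal.ofReal (s / 2) ≤ radMax u x} = ⊤ :=
        top_le_iff.1 (htop ▸ measure_mono hsub)
      have h2 := mul_meas_ge_le_lintegral₀ (μ := μ) hRm.aemeasurable (ENNReal.ofReal (s / 2))
      rw [h1, ENNReal.mul_top (ENNReal.ofReal_pos.2 (by positivity)).ne'] at h2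
      exact hRfin (top_le_iff.1 h2)
    have hT2 : T = {x | ENNReal.ofReal s < 2 * radMax u x} := by
      have h2 : (2:ℝ≥0∞) * ENNReal.ofReal (s / 2) = ENNReal.ofReal s := by
        rw [show (2:ℝ≥0∞) = ENNReal.ofReal 2 by norm_num,
          ← ENNReal.ofReal_mul (by norm_num)]
        congr 1
        ring
      ext z
      simp only [hTdef, mem_setOf_eq]
      rw [← h2, ENNReal.mul_lt_mul_iff_right (by norm_num) (by norm_num)]
    have hG2 : {x | ENNReal.ofReal (s / r) < gradMax u x}
        = {x | ENNReal.ofReal s < ENNReal.ofReal r * gradMax u x} := by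
      have h2 : ENNReal.ofReal r * ENNReal.ofReal (s / r) = ENNReal.ofReal s := by
        rw [← ENNReal.ofReal_mul hr0.le]
        congr 1
        field_simp
      ext z
      simp only [mem_setOf_eq]
      rw [← h2, ENNReal.mul_lt_mul_iff_right (ENNReal.ofReal_pos.2 hr0).ne' ENNReal.ofReal_ne_top]
    set S' : Set (EuclideanSpace ℝ (Fin n)) :=
      {x | ENNReal.ofReal s < ntMax u x ∧ gradMax u x ≤ ENNReal.ofReal (s / r)} with hS'def
    have hincl : {x | ENNReal.ofReal s < ntMax u x}
        ⊆ S' ∪ {x | ENNReal.ofReal (s / r) < gradMax u x} := by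
      intro x hx
      by_cases h : gradMax u x ≤ ENNReal.ofReal (s / r)
      · exact Or.inl ⟨hx, h⟩
      · exact Or.inr (not_le.1 h)
    have hcb : μ S' ≤ c * μ T := by
      refine cover_bound hn hr0 hr1 S' T hTmeas hTfin ?_
      intro x hx
      exact goodlambda u hdiff hr0 hr1 hs hx.1 hx.2
    calc μ {x | ENNReal.ofReal s < ntMax u x}
        ≤ μ (S' ∪ {x | ENNReal.ofReal (s / r) < gradMax u x}) := measure_mono hincl
      _ ≤ μ S' + μ {x | ENNReal.ofReal (s / r) < gradMax u x} := measure_union_le _ _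
      _ ≤ c * μ T + μ {x | ENNReal.ofReal (s / r) < gradMax u x} := by gcongr
      _ = c * μ {x | ENNReal.ofReal s < 2 * radMax u x}
          + μ {x | ENNReal.ofReal s < ENNReal.ofReal r * gradMax u x} := by
          rw [← hT2, ← hG2]
  -- measurability in `s` of the right-hand side pieces
  have hant1 : Antitone (fun s : ℝ => μ {x | ENNReal.ofReal s < 2 * radMax u x}) := by
    intro s s' hss'
    exact measure_mono fun x hx => lt_of_le_of_lt (ENNReal.ofReal_le_ofReal hss') hx
  have hant2 : Antitone
      (fun s : ℝ => μ {x | ENNReal.ofReal s < ENNReal.ofReal r * gradMax u x}) := by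
    intro s s' hss'
    exact measure_mono fun x hx => lt_of_le_of_lt (ENNReal.ofReal_le_ofReal hss') hx
  -- integrate the good-lambda inequality
  have L1 := layercake_ennreal μ hNm
  have L2 := layercake_ennreal μ (hRm.const_mul 2)
  have L3 := layercake_ennreal μ (hGm.const_mul (ENNReal.ofReal r))
  have hfinal : (∫⁻ x, ntMax u x ∂μ)
      ≤ c * (2 * ∫⁻ x, radMax u x ∂μ) + ENNReal.ofReal r * ∫⁻ x, gradMax u x ∂μ := by
    calc ∫⁻ x, ntMax u x ∂μ
        = ∫⁻ s in Set.Ioi (0:ℝ), μ {x | ENNReal.ofReal s < ntMax u x} := L1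
      _ ≤ ∫⁻ s in Set.Ioi (0:ℝ),
            (c * μ {x | ENNReal.ofReal s < 2 * radMax u x}
              + μ {x | ENNReal.ofReal s < ENNReal.ofReal r * gradMax u x}) := by
          refine lintegral_mono_ae ?_
          rw [ae_restrict_iff' measurableSet_Ioi]
          exact ae_of_all _ fun s hs => key s hs
      _ = c * (∫⁻ s in Set.Ioi (0:ℝ), μ {x | ENNReal.ofReal s < 2 * radMax u x})
          + ∫⁻ s in Set.Ioi (0:ℝ),
              μ {x | ENNReal.ofReal s < ENNReal.ofReal r * gradMax u x} := by
          rw [lintegral_add_left (hant1.measurable.const_mul c),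
            lintegral_const_mul c hant1.measurable]
      _ = c * (∫⁻ x, 2 * radMax u x ∂μ) + ∫⁻ x, ENNReal.ofReal r * gradMax u x ∂μ := by
          rw [← L2, ← L3]
      _ = c * (2 * ∫⁻ x, radMax u x ∂μ) + ENNReal.ofReal r * ∫⁻ x, gradMax u x ∂μ := by
          rw [lintegral_const_mul 2 hRm, lintegral_const_mul _ hGm]
  have hcoef : c * 2 = ENNReal.ofReal (2 * 8 ^ n / r ^ n) := by
    rw [hc, show (2:ℝ≥0∞) = ENNReal.ofReal 2 by norm_num,
      ← ENNReal.ofReal_mul (pow_nonneg (div_nonneg (by norm_num) hr0.le) n)]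
    congr 1
    rw [div_pow]
    ring
  calc (∫⁻ x, ntMax u x)
      ≤ c * (2 * ∫⁻ x, radMax u x) + ENNReal.ofReal r * ∫⁻ x, gradMax u x := hfinal
    _ = ENNReal.ofReal (2 * 8 ^ n / r ^ n) * (∫⁻ x, radMax u x)
        + ENNReal.ofReal r * ∫⁻ x, gradMax u x := by
        rw [← mul_assoc, hcoef]
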